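/- Let A = {0, 1, …, m} with m ≥ 1 and its usual order, and let ℓ ≥ 2. Then the word w₀ = m · (m−1) · m^{ℓ−2} (the letter m, followed by the letter m−1, followed by ℓ−2 copies of the letter m; so |w₀| = ℓ) is Nyldon, and every Nyldon word u with |u| ≤ ℓ satisfies u ≤_lex w₀. -/

import Mathlib

/-!
Common definitions: words over a totally ordered alphabet, lexicographic order,
Nyldon and Lyndon words, Nyldon-like sets, right Hall sets, and (circular) codes.
-/

/-- Strict lexicographic order on words: `u <_lex v` iff `u` is a proper prefix of `v`,
or `u` and `v` first differ at a position where `u` has the smaller letter. -/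
def LexLt {A : Type*} [LinearOrder A] (u v : List A) : Prop :=
  List.Lex (· < ·) u v

/-- Nonstrict lexicographic order on words. -/
def LexLe {A : Type*} [LinearOrder A] (u v : List A) : Prop :=
  u = v ∨ LexLt u v

theorem length_le_length_flatten_of_ne_nil {A : Type*} {s : List (List A)}
    (h : ∀ g ∈ s, g ≠ []) : s.length ≤ s.flatten.length := by
  induction s with
  | nil => simp
  | cons a t ih =>
    simp only [List.flatten_cons, List.length_append, List.length_cons]
    have ha : 1 ≤ a.length := List.length_pos_iff.mpr (h a (by simp))
    have ht := ih (fun g hg => h g (List.mem_cons_of_mem _ hg))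
    omega

theorem length_lt_length_flatten {A : Type*} {f : List A} {fs : List (List A)}
    (h2 : 2 ≤ fs.length) (hne : ∀ g ∈ fs, g ≠ []) (hf : f ∈ fs) :
    f.length < fs.flatten.length := by
  obtain ⟨s, t, rfl⟩ := List.append_of_mem hf
  have hs : s.length ≤ s.flatten.length :=
    length_le_length_flatten_of_ne_nil (fun g hg => hne g (by simp [hg]))
  have ht : t.length ≤ t.flatten.length :=
    length_le_length_flatten_of_ne_nil (fun g hg => hne g (by simp [hg]))
  have hlen : 2 ≤ s.length + t.length + 1 := by
    simp only [List.length_append, List.length_cons] at h2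
    omega
  have hj : (s ++ f :: t).flatten.length
      = s.flatten.length + f.length + t.flatten.length := by
    simp [List.flatten_append]
    omega
  omega

/-- A nonempty word is Nyldon if it admits no factorization into at least two
lexicographically nondecreasing Nyldon words. (Single letters are Nyldon vacuously,
since they admit no factorization into at least two nonempty words at all.) -/
def IsNyldon {A : Type*} [LinearOrder A] (w : List A) : Prop :=
  w ≠ [] ∧ ∀ fs : List (List A), 2 ≤ fs.length → (∀ g ∈ fs, g ≠ []) →
    fs.flatten = w → (∀ f ∈ fs, IsNyldon f) → fs.Chain' LexLe → False
termination_by w.length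
decreasing_by
  rename_i h2 hne hjoin hf
  subst hjoin
  exact length_lt_length_flatten h2 hne hf

/-- A nonempty word is Lyndon if it admits no factorization into at least two
lexicographically nonincreasing Lyndon words. -/
def IsLyndon {A : Type*} [LinearOrder A] (w : List A) : Prop :=
  w ≠ [] ∧ ∀ fs : List (List A), 2 ≤ fs.length → (∀ g ∈ fs, g ≠ []) →
    fs.flatten = w → (∀ f ∈ fs, IsLyndon f) →
    fs.Chain' (fun u v => LexLe v u) → False
termination_by w.length
decreasing_by
  rename_i h2 hne hjoin hf
  subst hjoin
  exact length_lt_length_flatten h2 hne hf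

/-- `fs` is a Nyldon factorization of `w`: a nondecreasing (under `≤_lex`) sequence
of Nyldon words whose concatenation is `w`. -/
def IsNyldonFactorization {A : Type*} [LinearOrder A] (fs : List (List A)) (w : List A) :
    Prop :=
  (∀ f ∈ fs, IsNyldon f) ∧ fs.Chain' LexLe ∧ fs.flatten = w

/-- The `j`-th power `u^j` of a word `u`: the concatenation of `j` copies of `u`. -/
def wordPow {A : Type*} (u : List A) (j : ℕ) : List A :=
  (List.replicate j u).flatten

/-- A word is primitive if it is not a power `u^j` of a word `u` with `j ≥ 2`. -/
def Primitive {A : Type*} (w : List A) : Prop :=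
  ∀ (u : List A) (j : ℕ), 2 ≤ j → w ≠ wordPow u j

/-- A Nyldon-like set over the alphabet `A`: a set `Mem` of nonempty words together with a
strict total order `lt` on it, such that every single letter is in the set, a word of length
at least `2` is in the set iff it admits no factorization into at least two nondecreasing
words of the set, and `f ≺ fg` whenever `f`, `g`, `fg` are all in the set. -/
structure NyldonLike (A : Type*) where
  /-- membership in `G` -/
  Mem : List A → Prop
  /-- the strict total order `≺` on `G` -/
  lt : List A → List A → Prop
  mem_ne_nil : ∀ w, Mem w → w ≠ []
  lt_irrefl : ∀ u, Mem u → ¬ lt u u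
  lt_trans : ∀ u v x, Mem u → Mem v → Mem x → lt u v → lt v x → lt u x
  lt_total : ∀ u v, Mem u → Mem v → lt u v ∨ u = v ∨ lt v u
  singleton_mem : ∀ a : A, Mem [a]
  mem_iff : ∀ w : List A, 2 ≤ w.length →
    (Mem w ↔ ¬ ∃ fs : List (List A), 2 ≤ fs.length ∧ (∀ f ∈ fs, Mem f) ∧
      fs.Chain' (fun u v => u = v ∨ lt u v) ∧ fs.flatten = w)
  append_lt : ∀ f g, Mem f → Mem g → Mem (f ++ g) → lt f (f ++ g)

namespace NyldonLike

variable {A : Type*}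

/-- The nonstrict order `⪯` associated to a Nyldon-like set. -/
def le (G : NyldonLike A) (u v : List A) : Prop :=
  u = v ∨ G.lt u v

/-- `fs` is a `G`-factorization of `w`: a nondecreasing (under `⪯`) sequence of
`G`-words whose concatenation is `w`. -/
def IsFactorization (G : NyldonLike A) (fs : List (List A)) (w : List A) : Prop :=
  (∀ f ∈ fs, G.Mem f) ∧ fs.Chain' G.le ∧ fs.flatten = w

end NyldonLike

/-- A factorization `fs` of a word written as the concatenation of `blocks` preserves the
blocks if each factor is the concatenation of a (nonempty) consecutive run of whole blocks. -/
def PreservesBlocks {A : Type*} (blocks fs : List (List A)) : Prop :=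
  ∃ P : List (List (List A)), (∀ p ∈ P, p ≠ []) ∧ P.flatten = blocks ∧
    P.map List.flatten = fs

/-- A right Hall set over the alphabet `A`: a set `Mem` of nonempty words with a strict
total order `lt` such that every nonempty word has a unique nondecreasing factorization
into words of the set, and `fg ≻ g` whenever `f`, `g`, `fg` are all in the set. -/
structure RightHallSet (A : Type*) where
  /-- membership in `H` -/
  Mem : List A → Prop
  /-- the strict total order `≺` on `H` -/
  lt : List A → List A → Prop
  mem_ne_nil : ∀ w, Mem w → w ≠ []
  lt_irrefl : ∀ u, Mem u → ¬ lt u u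
  lt_trans : ∀ u v x, Mem u → Mem v → Mem x → lt u v → lt v x → lt u x
  lt_total : ∀ u v, Mem u → Mem v → lt u v ∨ u = v ∨ lt v u
  unique_factorization : ∀ w : List A, w ≠ [] →
    ∃! fs : List (List A), (∀ f ∈ fs, Mem f) ∧
      fs.Chain' (fun u v => u = v ∨ lt u v) ∧ fs.flatten = w
  append_gt : ∀ f g, Mem f → Mem g → Mem (f ++ g) → lt g (f ++ g)

/-- A set `F` of words is a code if any two sequences of words of `F` with equal
concatenations are equal. -/
def IsCode {A : Type*} (F : List A → Prop) : Prop :=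
  ∀ l₁ l₂ : List (List A), (∀ f ∈ l₁, F f) → (∀ f ∈ l₂, F f) →
    l₁.flatten = l₂.flatten → l₁ = l₂

/-- `w ∈ F*`: `w` is a concatenation of (zero or more) words of `F`. -/
def CodeStar {A : Type*} (F : List A → Prop) (w : List A) : Prop :=
  ∃ l : List (List A), (∀ f ∈ l, F f) ∧ l.flatten = w

/-- A set `F` of words is a circular code if it is a code and whenever
`uv ∈ F*` and `vu ∈ F*`, also `u ∈ F*` and `v ∈ F*`. -/
def IsCircularCode {A : Type*} (F : List A → Prop) : Prop :=
  IsCode F ∧ ∀ u v : List A, CodeStar F (u ++ v) → CodeStar F (v ++ u) → CodeStar F u ∧ CodeStar F v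


section NyldonLemmas

variable {A : Type*} [LinearOrder A]

lemma nyldon_def (w : List A) :
    IsNyldon w ↔ w ≠ [] ∧ ∀ fs : List (List A), 2 ≤ fs.length → (∀ g ∈ fs, g ≠ []) →
      fs.flatten = w → (∀ f ∈ fs, IsNyldon f) → fs.Chain' LexLe → False := by
  rw [IsNyldon]

lemma IsNyldon.ne_nil' {w : List A} (h : IsNyldon w) : w ≠ [] :=
  ((nyldon_def w).mp h).1

lemma isNyldon_singleton (a : A) : IsNyldon [a] := by
  rw [nyldon_def]
  refine ⟨by simp, fun fs h2 hne hfl _ _ => ?_⟩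
  have := length_le_length_flatten_of_ne_nil hne
  rw [hfl] at this
  simp at this
  omega

lemma exists_nyldon_factorization (w : List A) (hw : w ≠ []) :
    ∃ fs : List (List A), (∀ f ∈ fs, IsNyldon f) ∧ fs.Chain' LexLe ∧
      fs.flatten = w ∧ fs ≠ [] := by
  by_cases h : IsNyldon w
  · exact ⟨[w], by simp [h], List.isChain_singleton _, by simp, by simp⟩
  · rw [nyldon_def] at h
    push_neg at h
    obtain ⟨fs, _, _, hfl, hf, hc⟩ := h hw
    exact ⟨fs, hf, hc.1, hfl, by rintro rfl; exact hw hfl.symm⟩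

lemma not_isNyldon_cons_cons (a : A) (v : List A) : ¬ IsNyldon (a :: a :: v) := by
  intro h
  obtain ⟨fs, hf, hc, hfl, hfs⟩ := exists_nyldon_factorization (a :: v) (by simp)
  obtain ⟨f₁, rest, rfl⟩ := List.exists_cons_of_ne_nil hfs
  obtain ⟨x, t, rfl⟩ := List.exists_cons_of_ne_nil (hf f₁ (by simp)).ne_nil'
  simp only [List.flatten_cons, List.cons_append, List.cons.injEq] at hfl
  obtain ⟨rfl, hfl2⟩ := hfl
  rw [nyldon_def] at h
  refine h.2 ([x] :: (x :: t) :: rest) (by simp) ?_ ?_ ?_ ?_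
  · intro g hg
    rcases List.mem_cons.mp hg with rfl | hg
    · simp
    · exact (hf g hg).ne_nil'
  · simp only [List.flatten_cons, List.singleton_append, List.cons_append, List.cons.injEq,
      true_and]
    simp [hfl2]
  · intro f hfmem
    rcases List.mem_cons.mp hfmem with rfl | hfmem
    · exact isNyldon_singleton x
    · exact hf f hfmem
  · refine List.isChain_cons_cons.mpr ⟨?_, hc⟩
    cases t with
    | nil => exact Or.inl rfl
    | cons c t' => exact Or.inr (List.Lex.cons List.Lex.nil)

end NyldonLemmas

section FinLemmas

lemma lexLe_replicate_last {m : ℕ} (s : List (Fin (m + 1))) (n : ℕ) (h : s.length ≤ n) :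
    LexLe s (List.replicate n (Fin.last m)) := by
  induction s generalizing n with
  | nil =>
    cases n with
    | zero => exact Or.inl rfl
    | succ k => exact Or.inr (by rw [List.replicate_succ]; exact List.Lex.nil)
  | cons c s ih =>
    simp only [List.length_cons] at h
    obtain ⟨k, rfl⟩ : ∃ k, n = k + 1 := ⟨n - 1, by omega⟩
    rw [List.replicate_succ]
    rcases lt_or_eq_of_le (Fin.le_last c) with hlt | rfl
    · exact Or.inr (List.Lex.rel hlt)
    · rcases ih k (by omega) with he | hl
      · exact Or.inl (by rw [he])
      · exact Or.inr (List.Lex.cons hl)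

lemma head_eq_last_of_lexLe {m : ℕ} {t v : List (Fin (m + 1))}
    (h : LexLe (Fin.last m :: t) v) (hv : v ≠ []) :
    ∃ s, v = Fin.last m :: s := by
  obtain ⟨y, s, rfl⟩ := List.exists_cons_of_ne_nil hv
  rcases h with he | hl
  · exact ⟨t, he.symm⟩
  · cases hl with
    | cons h' => exact ⟨s, rfl⟩
    | rel h' => exact absurd h' (not_lt_of_ge (Fin.le_last y))

end FinLemmas


/-- Over `A = {0, 1, …, m}` with `m ≥ 1`, for `ℓ ≥ 2` the word
`w₀ = m (m-1) m^{ℓ-2}` is Nyldon, and it is lexicographically largest among Nyldon words of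
length at most `ℓ`. -/
theorem stmt_16 (m ℓ : ℕ) (hm : 1 ≤ m) (hℓ : 2 ≤ ℓ) :
    IsNyldon (Fin.last m :: (⟨m - 1, by omega⟩ : Fin (m + 1)) ::
        List.replicate (ℓ - 2) (Fin.last m)) ∧
      ∀ u : List (Fin (m + 1)), IsNyldon u → u.length ≤ ℓ →
        LexLe u (Fin.last m :: (⟨m - 1, by omega⟩ : Fin (m + 1)) ::
          List.replicate (ℓ - 2) (Fin.last m)) := by
  set c : Fin (m + 1) := Fin.last m with hc
  set p : Fin (m + 1) := ⟨m - 1, by omega⟩ with hp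
  have hpc : p ≠ c := by
    simp only [hp, hc, Fin.last, Ne, Fin.mk.injEq]
    omega
  constructor
  · -- w₀ is Nyldon
    rw [nyldon_def]
    refine ⟨by simp, fun fs h2 hne hfl hnyl hch => ?_⟩
    obtain ⟨f₁, fs', rfl⟩ := List.exists_cons_of_ne_nil (show fs ≠ [] by rintro rfl; simp at h2)
    obtain ⟨f₂, rest, rfl⟩ := List.exists_cons_of_ne_nil
      (show fs' ≠ [] by rintro rfl; simp at h2)
    obtain ⟨x, t, rfl⟩ := List.exists_cons_of_ne_nil (hne f₁ (by simp))
    simp only [List.flatten_cons, List.cons_append, List.cons.injEq, List.append_assoc] at hfl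
    obtain ⟨rfl, hfl2⟩ := hfl
    obtain ⟨hle12, hch'⟩ := List.isChain_cons_cons.mp hch
    obtain ⟨s2, rfl⟩ := head_eq_last_of_lexLe hle12 (hne f₂ (by simp))
    cases t with
    | nil =>
      -- f₁ = [c], then f₂ starts at position 1, letter p
      simp only [List.nil_append, List.cons_append, List.cons.injEq] at hfl2
      exact hpc hfl2.1.symm
    | cons z t' =>
      simp only [List.cons_append, List.cons.injEq] at hfl2
      obtain ⟨rfl, hfl3⟩ := hfl2
      -- t' ++ (c::s2) ++ rest.flatten = replicate (ℓ-2) c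
      have hall : ∀ b ∈ (c :: s2) ++ rest.flatten, b = c := by
        intro b hb
        have : b ∈ List.replicate (ℓ - 2) c := by
          rw [← hfl3]
          exact List.mem_append_right _ hb
        exact List.eq_of_mem_replicate this
      -- s2 must be empty
      cases s2 with
      | cons d s2' =>
        have hd : d = c := hall d (by simp)
        have hmem := hnyl (Fin.last m :: d :: s2') (by simp)
        rw [hd, hc] at hmem
        exact not_isNyldon_cons_cons _ _ hmem
      | nil =>
        -- f₂ = [c]; chain gives LexLe (c::p::t') [c] : contradiction
        rcases hle12 with he | hl
        · simp at he
        · cases hl with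
          | cons h' => cases h'
          | rel h' => exact absurd h' (lt_irrefl c)
  · -- maximality
    intro u hu hlen
    obtain ⟨a, t, rfl⟩ := List.exists_cons_of_ne_nil hu.ne_nil'
    rcases lt_or_eq_of_le (Fin.le_last a) with ha | rfl
    · exact Or.inr (List.Lex.rel ha)
    · cases t with
      | nil => exact Or.inr (List.Lex.cons List.Lex.nil)
      | cons b s =>
        rcases lt_or_eq_of_le (Fin.le_last b) with hb | rfl
        · -- b < last m, so b ≤ p
          have hbp : b ≤ p := by
            simp only [hp, Fin.le_def]
            have := Fin.lt_def.mp hb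
            simp only [hc, Fin.val_last] at this ⊢
            omega
          rcases lt_or_eq_of_le hbp with hblt | rfl
          · exact Or.inr (List.Lex.cons (List.Lex.rel hblt))
          · -- b = p : compare tails
            simp only [List.length_cons] at hlen
            rcases lexLe_replicate_last s (ℓ - 2) (by omega) with he | hl
            · exact Or.inl (by rw [he])
            · exact Or.inr (List.Lex.cons (List.Lex.cons hl))
        · exact absurd hu (not_isNyldon_cons_cons _ s)
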